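/- Let V be a finite-dimensional complex vector space, b a symmetric bilinear form on V, and T : V → V a linear endomorphism that is b-symmetric, i.e. b(Tx, y) = b(x, Ty) for all x, y ∈ V. Then for any two distinct complex numbers λ ≠ μ, the generalized λ-eigenspace and the generalized μ-eigenspace of T are b-orthogonal: b(x, y) = 0 for every x with (T − λ·id)^N x = 0 for some N and every y with (T − μ·id)^M y = 0 for some M. -/
import Mathlib


/-- Generalized eigenspaces of a `b`-symmetric endomorphism for distinct
eigenvalues are `b`-orthogonal. -/
theorem generalized_eigenspaces_orthogonal
    {V : Type*} [AddCommGroup V] [Module ℂ V] [FiniteDimensional ℂ V]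
    (b : LinearMap.BilinForm ℂ V) (hb : ∀ x y, b x y = b y x)
    (T : Module.End ℂ V) (hT : ∀ x y, b (T x) y = b x (T y))
    (lam mu : ℂ) (hne : lam ≠ mu)
    (x y : V) (N M : ℕ)
    (hx : ((T - lam • 1) ^ N) x = 0)
    (hy : ((T - mu • 1) ^ M) y = 0) :
    b x y = 0 := by
  have key : ∀ k N M (x y : V), N + M ≤ k →
      (((T - lam • 1) ^ N : Module.End ℂ V)) x = 0 → (((T - mu • 1) ^ M : Module.End ℂ V)) y = 0 → b x y = 0 := by
    intro k
    induction k with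
    | zero =>
      intro N M x y hk hx hy
      have hN : N = 0 := by omega
      subst hN
      simp only [pow_zero, Module.End.one_apply] at hx
      simp [hx]
    | succ k ih =>
      intro N M x y hk hx hy
      match N, M with
      | 0, _ =>
        simp only [pow_zero, Module.End.one_apply] at hx
        simp [hx]
      | _, 0 =>
        simp only [pow_zero, Module.End.one_apply] at hy
        simp [hy]
      | n + 1, m + 1 =>
        have hx' : ((T - lam • 1) ^ n) ((T - lam • 1) x) = 0 := by
          rw [← Module.End.mul_apply, ← pow_succ]; exact hx
        have hy' : ((T - mu • 1) ^ m) ((T - mu • 1) y) = 0 := by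
          rw [← Module.End.mul_apply, ← pow_succ]; exact hy
        have h1 : b ((T - lam • 1) x) y = 0 := ih n (m + 1) _ _ (by omega) hx' hy
        have h2 : b x ((T - mu • 1) y) = 0 := ih (n + 1) m _ _ (by omega) hx hy'
        have e1 : b x ((T - mu • 1) y) = b ((T - mu • 1) x) y := by
          simp only [LinearMap.sub_apply, LinearMap.smul_apply, Module.End.one_apply,
            map_sub, map_smul, LinearMap.sub_apply, LinearMap.smul_apply, hT]
        have e2 : (T - mu • 1) x = (T - lam • 1) x + (lam - mu) • x := by
          simp only [LinearMap.sub_apply, LinearMap.smul_apply, Module.End.one_apply]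
          module
        rw [e1, e2] at h2
        simp only [map_add, map_smul, LinearMap.add_apply, LinearMap.smul_apply, h1,
          smul_eq_mul, zero_add] at h2
        rcases mul_eq_zero.mp h2 with h | h
        · exact absurd (sub_eq_zero.mp h) hne
        · exact h
  exact key (N + M) N M x y le_rfl hx hy
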